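/- arXiv:1311.4332 — 2 statements merged into one kernel-verified Lean document; each statement's English description precedes it below -/
import Mathlib

section
/- Let E be a directed graph such that E^0 is nonempty and downward directed, E has no sinks (every vertex emits at least one edge), and there is a countable subset S ⊆ E^0 such that every vertex of E^0 connects to some vertex of S. Then there exists an infinite path p in E such that every vertex of E^0 connects to some vertex of p^0. -/
/-- A directed graph: a set of vertices, a set of edges, and source/range maps. -/
structure DirGraph where
  V : Type
  E : Type
  src : E → V
  rng : E → V

namespace DirGraph

variable (G : DirGraph)

/-- `Connects u v` means there is a finite path (possibly of length 0) from `u` to `v`,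
i.e. `u ≥ v`. -/
inductive Connects : G.V → G.V → Prop
  | refl (v : G.V) : Connects v v
  | step {u w : G.V} (e : G.E) : G.src e = u → Connects (G.rng e) w → Connects u w

/-- A vertex is a sink if it emits no edges. -/
def IsSink (v : G.V) : Prop := ∀ e : G.E, G.src e ≠ v

/-- A vertex is an infinite emitter if it emits infinitely many edges. -/
def IsInfiniteEmitter (v : G.V) : Prop := {e : G.E | G.src e = v}.Infinite

/-- A vertex is regular if it emits finitely many, but at least one, edges. -/
def IsRegular (v : G.V) : Prop :=
  {e : G.E | G.src e = v}.Finite ∧ {e : G.E | G.src e = v}.Nonempty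

/-- A set of vertices is hereditary if it is closed under `≥`. -/
def Hereditary (H : Set G.V) : Prop := ∀ v ∈ H, ∀ w, G.Connects v w → w ∈ H

/-- A set of vertices is saturated if it contains every regular vertex all of whose
emitted edges have range in the set. -/
def Saturated (H : Set G.V) : Prop :=
  ∀ v, G.IsRegular v → (∀ e : G.E, G.src e = v → G.rng e ∈ H) → v ∈ H

/-- `M(v) = {w : w ≥ v}`. -/
def Mv (v : G.V) : Set G.V := {w | G.Connects w v}

/-- A closed path based at `v`: a nonempty list of consecutive edges starting and ending
at `v`. -/
structure ClosedPath (v : G.V) where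
  edges : List G.E
  ne : edges ≠ []
  chain : edges.Chain' (fun e f => G.rng e = G.src f)
  src_eq : G.src (edges.head ne) = v
  rng_eq : G.rng (edges.getLast ne) = v

/-- A cycle based at `v`: a closed path based at `v` which does not pass through any
vertex twice. -/
structure Cycle (v : G.V) extends ClosedPath G v where
  nodup : (edges.map G.src).Nodup

/-- An infinite path: a sequence of consecutive edges, indexed by `ℕ`. -/
structure InfPath where
  edge : ℕ → G.E
  chain : ∀ n, G.rng (edge n) = G.src (edge (n + 1))

variable {G}

@[ext] lemma InfPath.ext {p q : G.InfPath} (h : p.edge = q.edge) : p = q := by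
  cases p; cases q; simp only at h; subst h; rfl

/-- `τ_{>n}(p)`, the shift of the infinite path `p` by `n`. -/
def InfPath.shift (p : G.InfPath) (n : ℕ) : G.InfPath where
  edge k := p.edge (k + n)
  chain k := by have := p.chain (k + n); rwa [show k + n + 1 = k + 1 + n by omega] at this

/-- Two infinite paths are tail-equivalent if some shift of the first equals some shift
of the second. -/
def TailEquiv (p q : G.InfPath) : Prop := ∃ m n : ℕ, p.shift m = q.shift n

/-- The set `p^0` of vertices visited by the infinite path `p`. -/
def InfPath.vertices (p : G.InfPath) : Set G.V := {v | ∃ n : ℕ, G.src (p.edge n) = v}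

/-- `M(p) = {w : w ≥ v for some vertex v on p}`. -/
def Mp (p : G.InfPath) : Set G.V := {w | ∃ v ∈ p.vertices, G.Connects w v}

/-- The set `c^0` of vertices visited by a closed path `c`. -/
def ClosedPath.vertexSet {v : G.V} (c : G.ClosedPath v) : Set G.V :=
  {w | ∃ e ∈ c.edges, G.src e = w}

/-- An exit for the (closed) path `c`: an edge `e` with `s(e) = s(e_i)` and `e ≠ e_i`
for some `i`. -/
def ClosedPath.HasExit {v : G.V} (c : G.ClosedPath v) : Prop :=
  ∃ (i : Fin c.edges.length) (e : G.E), G.src e = G.src (c.edges.get i) ∧ e ≠ c.edges.get i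

lemma ClosedPath.length_pos {v : G.V} (c : G.ClosedPath v) : 0 < c.edges.length :=
  List.length_pos_iff.mpr c.ne

/-- The rational infinite path `c^∞ = ccc⋯` attached to a closed path `c`. -/
def ClosedPath.toInfPath {v : G.V} (c : G.ClosedPath v) : G.InfPath where
  edge n := c.edges.get ⟨n % c.edges.length, Nat.mod_lt _ c.length_pos⟩
  chain n := by
    have hL : 0 < c.edges.length := c.length_pos
    have hmod : (n + 1) % c.edges.length = (n % c.edges.length + 1) % c.edges.length :=
      (Nat.mod_add_mod n c.edges.length 1).symm
    by_cases h : n % c.edges.length + 1 < c.edges.length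
    · have h2 : (n + 1) % c.edges.length = n % c.edges.length + 1 := by
        rw [hmod, Nat.mod_eq_of_lt h]
      have := List.isChain_iff_getElem.mp c.chain (n % c.edges.length) (by omega)
      simp only [h2]
      convert this using 3 <;> rfl
    · have hlast : n % c.edges.length = c.edges.length - 1 := by
        have := Nat.mod_lt n hL; omega
      have h2 : (n + 1) % c.edges.length = 0 := by
        rw [hmod, hlast, Nat.sub_add_cancel hL, Nat.mod_self]
      have e1 : c.edges.get ⟨n % c.edges.length, Nat.mod_lt _ hL⟩ = c.edges.getLast c.ne := by
        rw [List.getLast_eq_getElem]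
        simp [hlast]
      have e2 : c.edges.get ⟨(n + 1) % c.edges.length, Nat.mod_lt _ hL⟩ =
          c.edges.head c.ne := by
        rw [List.head_eq_getElem]
        simp [h2]
      rw [e1, e2, c.rng_eq, c.src_eq]

end DirGraph

namespace DirGraph
variable {G : DirGraph}

lemma InfPath.shift_shift (p : G.InfPath) (m n : ℕ) :
    (p.shift m).shift n = p.shift (n + m) := by
  ext k
  show p.edge (k + n + m) = p.edge (k + (n + m))
  rw [Nat.add_assoc]

/-- Concatenation of two closed paths based at the same vertex. -/
def ClosedPath.comp {v : G.V} (c d : G.ClosedPath v) : G.ClosedPath v where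
  edges := c.edges ++ d.edges
  ne := by simp [c.ne]
  chain := by
    refine c.chain.append d.chain ?_
    intro x hx y hy
    rw [List.getLast?_eq_some_getLast c.ne, Option.mem_def, Option.some_inj] at hx
    rw [List.head?_eq_head d.ne, Option.mem_def, Option.some_inj] at hy
    rw [← hx, ← hy] at *
    rw [c.rng_eq, d.src_eq]
  src_eq := by
    have : (c.edges ++ d.edges).head (by simp [c.ne]) = c.edges.head c.ne := by
      rw [List.head_append]
      simp [c.ne]
    rw [this, c.src_eq]
  rng_eq := by
    have : (c.edges ++ d.edges).getLast (by simp [c.ne]) = d.edges.getLast d.ne := by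
      rw [List.getLast_append]
      simp [d.ne]
    rw [this, d.rng_eq]

/-- `c.pow m` is the closed path `c^{m+1}`. -/
def ClosedPath.pow {v : G.V} (c : G.ClosedPath v) : ℕ → G.ClosedPath v
  | 0 => c
  | (m + 1) => c.comp (c.pow m)

/-- Auxiliary index function for the infinite concatenation of a sequence of closed
paths based at the same vertex: `blockIdx f n` is the pair (block number, offset in
the block) corresponding to overall position `n`. -/
def blockIdx {v : G.V} (f : ℕ → G.ClosedPath v) : ℕ → (b : ℕ) × Fin (f b).edges.length
  | 0 => ⟨0, ⟨0, (f 0).length_pos⟩⟩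
  | n + 1 =>
    if h : ((blockIdx f n).2 : ℕ) + 1 < (f (blockIdx f n).1).edges.length then
      ⟨(blockIdx f n).1, ⟨(blockIdx f n).2 + 1, h⟩⟩
    else
      ⟨(blockIdx f n).1 + 1, ⟨0, (f ((blockIdx f n).1 + 1)).length_pos⟩⟩

/-- The infinite path `f 0 · f 1 · f 2 ⋯` obtained by concatenating a sequence of
closed paths based at the same vertex. -/
def infConcat {v : G.V} (f : ℕ → G.ClosedPath v) : G.InfPath where
  edge n := (f (blockIdx f n).1).edges.get (blockIdx f n).2
  chain n := by
    rw [blockIdx]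
    by_cases h : ((blockIdx f n).2 : ℕ) + 1 < (f (blockIdx f n).1).edges.length
    · rw [dif_pos h]
      exact List.isChain_iff_getElem.mp (f (blockIdx f n).1).chain ((blockIdx f n).2 : ℕ) (by omega)
    · rw [dif_neg h]
      have h2 : ((blockIdx f n).2 : ℕ) = (f (blockIdx f n).1).edges.length - 1 := by
        have := (blockIdx f n).2.isLt; omega
      have e1 : (f (blockIdx f n).1).edges.get (blockIdx f n).2 =
          (f (blockIdx f n).1).edges.getLast (f (blockIdx f n).1).ne := by
        rw [List.getLast_eq_getElem]
        simp only [List.get_eq_getElem]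
        congr 1
      have e2 : (f ((blockIdx f n).1 + 1)).edges.get ⟨0, (f ((blockIdx f n).1 + 1)).length_pos⟩ =
          (f ((blockIdx f n).1 + 1)).edges.head (f ((blockIdx f n).1 + 1)).ne := by
        rw [List.head_eq_getElem]
        rfl
      rw [e1]
      rw [e2]
      rw [(f (blockIdx f n).1).rng_eq]
      rw [(f ((blockIdx f n).1 + 1)).src_eq]

end DirGraph

namespace DirGraph

variable {G : DirGraph}

lemma Connects.trans {u v w : G.V} (h1 : G.Connects u v) (h2 : G.Connects v w) :
    G.Connects u w := by
  induction h1 with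
  | refl => exact h2
  | step e hs _ ih => exact .step e hs (ih h2)

lemma exists_pathList {u v : G.V} (h : G.Connects u v) :
    ∃ l : List G.E, l.Chain' (fun e f => G.rng e = G.src f) ∧
      (∀ h' : l ≠ [], G.src (l.head h') = u) ∧ (l = [] → u = v) ∧
      (∀ h' : l ≠ [], G.rng (l.getLast h') = v) := by
  induction h with
  | refl v => exact ⟨[], List.isChain_nil, by simp, fun _ => rfl, by simp⟩
  | step e hsrc _ ih =>
    obtain ⟨l, hc, hh, he, hl⟩ := ih
    refine ⟨e :: l, ?_, by simpa using hsrc, by simp, ?_⟩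
    · unfold List.Chain'; rw [List.isChain_cons]
      refine ⟨?_, hc⟩
      intro f hf
      rcases l with _ | ⟨g, t⟩
      · simp at hf
      · simp only [List.head?_cons, Option.mem_def, Option.some_inj] at hf
        subst hf
        exact (hh (by simp)).symm
    · intro h'
      rcases l with _ | ⟨g, t⟩
      · simpa using he rfl
      · rw [List.getLast_cons (by simp)]
        exact hl (by simp)

lemma headD_eq_head' {α : Type*} {l : List α} (h : l ≠ []) (d : α) :
    l.headD d = l.head h := by
  cases l with
  | nil => exact absurd rfl h
  | cons a t => rfl

section Aux
variable (blk : G.V → ℕ → List G.E)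

def stepA : List G.E × ℕ → List G.E × ℕ
  | ([], k) => ([], k)
  | ([e], k) => (blk (G.rng e) (k + 1), k + 1)
  | (_ :: f :: t, k) => (f :: t, k)

def stateA (u0 : G.V) : ℕ → List G.E × ℕ
  | 0 => (blk u0 0, 0)
  | n + 1 => stepA blk (stateA u0 n)

variable (u0 : G.V)
variable (hbne : ∀ u k, blk u k ≠ [])
  (hbch : ∀ u k, (blk u k).Chain' (fun e f => G.rng e = G.src f))
  (hbhd : ∀ u k (h' : blk u k ≠ []), G.src ((blk u k).head h') = u)

include hbne hbch in
lemma invA : ∀ n, (stateA blk u0 n).1 ≠ [] ∧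
    (stateA blk u0 n).1.Chain' (fun e f => G.rng e = G.src f) := by
  intro n
  induction n with
  | zero => exact ⟨hbne u0 0, hbch u0 0⟩
  | succ n ih =>
    rcases hs : stateA blk u0 n with ⟨q, k⟩
    rw [hs] at ih
    rcases q with _ | ⟨e, q⟩
    · simp at ih
    rcases q with _ | ⟨f, t⟩
    · have h1 : stateA blk u0 (n+1) = (blk (G.rng e) (k+1), k+1) := by
        simp [stateA, hs, stepA]
      rw [h1]
      exact ⟨hbne _ _, hbch _ _⟩
    · refine ⟨by simp [stateA, hs, stepA], ?_⟩
      have : (stateA blk u0 (n+1)).1 = f :: t := by simp [stateA, hs, stepA]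
      rw [this]
      exact (List.isChain_cons.mp ih.2).2

lemma dropA (n : ℕ) : ∀ j, j < (stateA blk u0 n).1.length →
    stateA blk u0 (n + j) = ((stateA blk u0 n).1.drop j, (stateA blk u0 n).2) := by
  intro j
  induction j with
  | zero => simp
  | succ j ih =>
    intro hj
    have hj' : j < (stateA blk u0 n).1.length := by omega
    have ihe := ih hj'
    rcases hs : stateA blk u0 n with ⟨q, k⟩
    rw [hs] at ihe hj hj'
    dsimp only at ihe hj hj' ⊢
    have hdq : q.drop j = q[j] :: q.drop (j + 1) := List.drop_eq_getElem_cons hj'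
    rcases hd : q.drop (j+1) with _ | ⟨y, t⟩
    · have : (q.drop (j+1)).length = q.length - (j+1) := List.length_drop
      rw [hd] at this
      simp at this
      omega
    · have h2 : stateA blk u0 (n + (j+1)) = stepA blk (q[j] :: y :: t, k) := by
        rw [show n + (j+1) = (n+j) + 1 from rfl]
        rw [stateA, ihe, hdq, hd]
      rw [h2]
      simp [stepA]

lemma nextA (n : ℕ) (hq : (stateA blk u0 n).1 ≠ []) :
    ∃ u', stateA blk u0 (n + (stateA blk u0 n).1.length) =
      (blk u' ((stateA blk u0 n).2 + 1), (stateA blk u0 n).2 + 1) := by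
  have hL : 0 < (stateA blk u0 n).1.length := List.length_pos_iff.mpr hq
  have hd := dropA blk u0 n ((stateA blk u0 n).1.length - 1) (by omega)
  rcases hs : stateA blk u0 n with ⟨q, k⟩
  rw [hs] at hd hL
  dsimp only at hd hL ⊢
  have h1 : q.drop (q.length - 1) = [q[q.length - 1]] := by
    rw [List.drop_eq_getElem_cons (by omega)]
    rw [show q.length - 1 + 1 = q.length from by omega, List.drop_length]
  refine ⟨G.rng q[q.length - 1], ?_⟩
  have h3 : n + q.length = (n + (q.length - 1)) + 1 := by omega
  rw [h3, stateA, hd, h1]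
  simp [stepA]

include hbne in
lemma stageA : ∀ k, ∃ n u, stateA blk u0 n = (blk u k, k) := by
  intro k
  induction k with
  | zero => exact ⟨0, u0, rfl⟩
  | succ k ih =>
    obtain ⟨n, u, h⟩ := ih
    have hq : (stateA blk u0 n).1 ≠ [] := by rw [h]; exact hbne u k
    obtain ⟨u', h'⟩ := nextA blk u0 n hq
    rw [h] at h'
    exact ⟨n + (blk u k).length, u', h'⟩

variable (e₀ : G.E)

def edgeA (n : ℕ) : G.E := (stateA blk u0 n).1.headD e₀

include hbne hbch hbhd in
lemma chainA (n : ℕ) :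
    G.rng (edgeA blk u0 e₀ n) = G.src (edgeA blk u0 e₀ (n + 1)) := by
  have hi := invA blk u0 hbne hbch n
  unfold edgeA
  rcases hs : stateA blk u0 n with ⟨q, k⟩
  rw [hs] at hi
  rcases q with _ | ⟨e, q⟩
  · simp at hi
  rcases q with _ | ⟨f, t⟩
  · have h1 : stateA blk u0 (n+1) = (blk (G.rng e) (k+1), k+1) := by
      simp [stateA, hs, stepA]
    rw [h1]
    dsimp only
    simp only [List.headD_cons]
    rw [headD_eq_head' (hbne (G.rng e) (k+1)) e₀]
    exact (hbhd _ _ (hbne _ _)).symm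
  · have h1 : stateA blk u0 (n+1) = (f :: t, k) := by
      simp [stateA, hs, stepA]
    rw [h1]
    exact (List.isChain_cons_cons.mp hi.2).1

def pathA : G.InfPath := ⟨edgeA blk u0 e₀, chainA blk u0 hbne hbch hbhd e₀⟩

include hbne hbch hbhd in
lemma getA (n : ℕ) (j : ℕ) (hj : j < (stateA blk u0 n).1.length) :
    (pathA blk u0 hbne hbch hbhd e₀).edge (n + j) = (stateA blk u0 n).1[j] := by
  have hd := dropA blk u0 n j hj
  show (stateA blk u0 (n+j)).1.headD e₀ = _
  rw [hd]
  dsimp only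
  rw [List.drop_eq_getElem_cons hj]
  rfl

end Aux

/-- If `E⁰` is nonempty and downward directed, `E` has no sinks, and there is a countable
subset `S ⊆ E⁰` to which every vertex connects, then there is an infinite path `p` such
that every vertex of `E⁰` connects to a vertex on `p`. -/
theorem exists_infinite_path_of_countable_separation {G : DirGraph}
    (hne : Nonempty G.V)
    (hdir : ∀ u w : G.V, ∃ z : G.V, G.Connects u z ∧ G.Connects w z)
    (hnosink : ∀ v : G.V, ∃ e : G.E, G.src e = v)
    (S : Set G.V) (hS : S.Countable)
    (hsep : ∀ u : G.V, ∃ s ∈ S, G.Connects u s) :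
    ∃ p : G.InfPath, ∀ u : G.V, ∃ x ∈ p.vertices, G.Connects u x := by
  classical
  obtain ⟨v₀⟩ := hne
  obtain ⟨e₀, he₀⟩ := hnosink v₀
  obtain ⟨s₀, hs₀S, -⟩ := hsep v₀
  obtain ⟨g, hg⟩ := hS.exists_eq_range ⟨s₀, hs₀S⟩
  have blkP : ∀ (u : G.V) (k : ℕ), ∃ q : List G.E, q ≠ [] ∧
      q.Chain' (fun e f => G.rng e = G.src f) ∧
      (∀ h' : q ≠ [], G.src (q.head h') = u) ∧
      ∃ x, G.Connects (g k) x ∧ ∃ e ∈ q, G.src e = x := by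
    intro u k
    obtain ⟨z, huz, hgz⟩ := hdir u (g k)
    obtain ⟨l, hc, hh, hemp, hl⟩ := exists_pathList huz
    obtain ⟨e, he⟩ := hnosink z
    refine ⟨l ++ [e], by simp, ?_, ?_, z, hgz, e, by simp, he⟩
    · unfold List.Chain'; rw [List.isChain_append]
      refine ⟨hc, by simp, ?_⟩
      intro x hx y hy
      simp only [List.head?_cons, Option.mem_def, Option.some_inj] at hy
      subst hy
      rcases l with _ | ⟨a, t⟩
      · simp at hx
      · rw [List.getLast?_eq_getLast (by simp), Option.mem_def, Option.some_inj] at hx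
        subst hx
        rw [hl (by simp), he]
    · intro h'
      rcases l with _ | ⟨a, t⟩
      · simpa [he] using (hemp rfl).symm
      · have : ((a :: t) ++ [e]).head (by simp) = (a :: t).head (by simp) := by
          rw [List.head_append]
          simp
        rw [this]
        exact hh (by simp)
  choose blk hbne hbch hbhd z hz edg hmem hsrc using blkP
  refine ⟨pathA blk v₀ hbne hbch hbhd e₀, ?_⟩
  intro u
  obtain ⟨s, hsS, hus⟩ := hsep u
  have hsr : s ∈ Set.range g := hg ▸ hsS
  obtain ⟨k, rfl⟩ := hsr
  obtain ⟨n, w, hn⟩ := stageA blk v₀ hbne k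
  obtain ⟨j, hjlen, hjget⟩ := List.mem_iff_getElem.mp (hmem w k)
  have hjlen' : j < (stateA blk v₀ n).1.length := by rw [hn]; exact hjlen
  have hedge := getA blk v₀ hbne hbch hbhd e₀ n j hjlen'
  refine ⟨z w k, ⟨n + j, ?_⟩, hus.trans (hz w k)⟩
  rw [hedge]
  have : (stateA blk v₀ n).1[j]'hjlen' = (blk w k)[j]'hjlen := by
    simp only [hn]
  rw [this, hjget]
  exact hsrc w k

end DirGraph
end

section
/- Let E be a directed graph, let v ∈ E^0, and let g and h be two cycles based at v that are distinct as sequences of edges. Then the infinite path p = g h^2 g h^3 g h^4 ⋯ (the concatenation of g, then two copies of h, then g, then three copies of h, and so on) is not tail-equivalent to the rational path c^∞ for any closed path c in E. -/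
namespace DirGraph

variable {G : DirGraph} {v : G.V}

/-! ### Auxiliary development -/

/-- Partial sums of block lengths. -/
def sums (f : ℕ → G.ClosedPath v) : ℕ → ℕ
  | 0 => 0
  | k + 1 => sums f k + (f k).edges.length

lemma sums_succ (f : ℕ → G.ClosedPath v) (k : ℕ) :
    sums f (k + 1) = sums f k + (f k).edges.length := rfl

lemma sums_strictMono (f : ℕ → G.ClosedPath v) : StrictMono (sums f) :=
  strictMono_nat_of_lt_succ fun k => by
    have := (f k).length_pos; rw [sums_succ]; omega

lemma le_sums (f : ℕ → G.ClosedPath v) (k : ℕ) : k ≤ sums f k := by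
  induction k with
  | zero => simp [sums]
  | succ k ih => have := (f k).length_pos; rw [sums_succ]; omega

lemma blockIdx_spec (f : ℕ → G.ClosedPath v) :
    ∀ n, n = sums f (blockIdx f n).1 + ((blockIdx f n).2 : ℕ)
  | 0 => by simp [blockIdx, sums]
  | n + 1 => by
    have ih := blockIdx_spec f n
    rw [blockIdx]
    by_cases hc : ((blockIdx f n).2 : ℕ) + 1 < (f (blockIdx f n).1).edges.length
    · rw [dif_pos hc]
      show n + 1 = sums f (blockIdx f n).1 + (((blockIdx f n).2 : ℕ) + 1)
      omega
    · rw [dif_neg hc]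
      have hlt := (blockIdx f n).2.isLt
      show n + 1 = sums f ((blockIdx f n).1 + 1) + 0
      rw [sums_succ]
      omega

lemma rep_unique {f : ℕ → G.ClosedPath v} {k k' o o' : ℕ}
    (ho : o < (f k).edges.length) (ho' : o' < (f k').edges.length)
    (heq : sums f k + o = sums f k' + o') : k = k' ∧ o = o' := by
  rcases lt_trichotomy k k' with hlt | heqk | hlt
  · exfalso
    have h1 : sums f (k + 1) ≤ sums f k' := (sums_strictMono f).monotone hlt
    rw [sums_succ] at h1; omega
  · subst heqk; exact ⟨rfl, by omega⟩
  · exfalso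
    have h1 : sums f (k' + 1) ≤ sums f k := (sums_strictMono f).monotone hlt
    rw [sums_succ] at h1; omega

lemma infConcat_edge (f : ℕ → G.ClosedPath v) (k o : ℕ) (ho : o < (f k).edges.length) :
    (infConcat f).edge (sums f k + o) = (f k).edges[o] := by
  have hs := blockIdx_spec f (sums f k + o)
  have hbe : blockIdx f (sums f k + o) = ⟨k, ⟨o, ho⟩⟩ := by
    rcases hbe' : blockIdx f (sums f k + o) with ⟨b', o'⟩
    rw [hbe'] at hs
    obtain ⟨hk, hoe⟩ := rep_unique o'.isLt ho hs.symm
    subst hk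
    have ho2 : o' = ⟨o, ho⟩ := Fin.ext hoe
    rw [ho2]
  show (f (blockIdx f (sums f k + o)).1).edges.get (blockIdx f (sums f k + o)).2 = _
  rw [hbe]
  rfl

lemma pow_edges_length (c : G.ClosedPath v) (m : ℕ) :
    (c.pow m).edges.length = (m + 1) * c.edges.length := by
  induction m with
  | zero => simp [ClosedPath.pow]
  | succ m ih =>
    show (c.edges ++ (c.pow m).edges).length = _
    rw [List.length_append, ih]; ring

lemma pow_edges_getElem (c : G.ClosedPath v) (m i : ℕ) (hi : i < (m + 1) * c.edges.length) :
    (c.pow m).edges[i]'(by rw [pow_edges_length]; exact hi) =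
      c.edges[i % c.edges.length]'(Nat.mod_lt _ c.length_pos) := by
  induction m generalizing i with
  | zero =>
    have hi' : i < c.edges.length := by omega
    show c.edges[i]'hi' = _
    congr 1
    exact (Nat.mod_eq_of_lt hi').symm
  | succ m ih =>
    show (c.edges ++ (c.pow m).edges)[i]'(by rw [List.length_append, pow_edges_length]; rw [Nat.succ_mul] at hi; omega) = _
    by_cases hlt : i < c.edges.length
    · rw [List.getElem_append_left hlt]
      congr 1
      exact (Nat.mod_eq_of_lt hlt).symm
    · have hle : c.edges.length ≤ i := by omega
      rw [List.getElem_append_right hle]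
      have h2 : i - c.edges.length < (m + 1) * c.edges.length := by
        have := c.length_pos
        rw [Nat.succ_mul] at hi
        omega
      rw [ih _ h2]
      congr 1
      exact (Nat.mod_eq_sub_mod hle).symm

lemma toInfPath_edge_add {w : G.V} (c : G.ClosedPath w) (x : ℕ) :
    c.toInfPath.edge (x + c.edges.length) = c.toInfPath.edge x := by
  show c.edges.get ⟨(x + c.edges.length) % c.edges.length, _⟩ =
    c.edges.get ⟨x % c.edges.length, _⟩
  simp only [List.get_eq_getElem]
  congr 1
  exact Nat.add_mod_right x c.edges.length

section GH

variable (g h : G.Cycle v)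

/-- The sequence of blocks of the path `g h² g h³ ⋯`. -/
def ghF : ℕ → G.ClosedPath v := fun k => g.toClosedPath.comp (h.toClosedPath.pow (k + 1))

lemma ghF_length (k : ℕ) :
    (ghF g h k).edges.length = g.edges.length + (k + 2) * h.edges.length := by
  show (g.edges ++ (h.toClosedPath.pow (k + 1)).edges).length = _
  rw [List.length_append, pow_edges_length]

lemma ghF_getElem_left (k o : ℕ) (ho : o < g.edges.length) :
    (ghF g h k).edges[o]'(by rw [ghF_length]; omega) = g.edges[o] :=
  List.getElem_append_left ho

lemma ghF_getElem_right (k j : ℕ) (hj : j < (k + 2) * h.edges.length) :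
    (ghF g h k).edges[g.edges.length + j]'(by rw [ghF_length]; omega) =
      h.edges[j % h.edges.length]'(Nat.mod_lt _ h.length_pos) := by
  have hx : (k + 1 + 1) * h.edges.length = (k + 2) * h.edges.length := by ring
  have h1 : (g.edges ++ (h.toClosedPath.pow (k + 1)).edges)[g.edges.length + j]'(by
      rw [List.length_append, pow_edges_length]; omega) =
      (h.toClosedPath.pow (k + 1)).edges[g.edges.length + j - g.edges.length]'(by
      rw [pow_edges_length]; omega) :=
    List.getElem_append_right (by omega)
  show (g.edges ++ (h.toClosedPath.pow (k + 1)).edges)[g.edges.length + j]'(by rw [List.length_append, pow_edges_length]; omega) = _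
  rw [h1]
  have h2 : g.edges.length + j - g.edges.length = j := by omega
  have h3 := pow_edges_getElem h.toClosedPath (k + 1) (g.edges.length + j - g.edges.length)
    (by rw [h2]; omega)
  rw [h3]
  congr 1
  rw [h2]

lemma E_left (k o : ℕ) (ho : o < g.edges.length) :
    (infConcat (ghF g h)).edge (sums (ghF g h) k + o) = g.edges[o] := by
  rw [infConcat_edge (ghF g h) k o (by rw [ghF_length]; have := h.length_pos; omega)]
  exact ghF_getElem_left g h k o ho

lemma E_right (k j : ℕ) (hj : j < (k + 2) * h.edges.length) :
    (infConcat (ghF g h)).edge (sums (ghF g h) k + (g.edges.length + j)) =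
      h.edges[j % h.edges.length]'(Nat.mod_lt _ h.length_pos) := by
  rw [infConcat_edge (ghF g h) k (g.edges.length + j) (by rw [ghF_length]; omega)]
  exact ghF_getElem_right g h k j hj

end GH

lemma cycle_src_eq_v_iff (g : G.Cycle v) (i : ℕ) (hi : i < g.edges.length) :
    G.src (g.edges[i]) = v ↔ i = 0 := by
  have h0 : G.src (g.edges[0]'g.length_pos) = v := by
    have := g.src_eq
    rwa [List.head_eq_getElem] at this
  constructor
  · intro hsrc
    have hmap : (g.edges.map G.src)[i]'(by simpa using hi) =
        (g.edges.map G.src)[0]'(by simpa using g.length_pos) := by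
      rw [List.getElem_map, List.getElem_map, hsrc, h0]
    exact g.nodup.getElem_inj_iff.mp hmap
  · rintro rfl
    exact h0

section Main

variable (g h : G.Cycle v)

lemma src_E_eq_v_iff (k o : ℕ)
    (ho : o < g.edges.length + (k + 2) * h.edges.length) :
    G.src ((infConcat (ghF g h)).edge (sums (ghF g h) k + o)) = v ↔
      (o = 0 ∨ (g.edges.length ≤ o ∧ (o - g.edges.length) % h.edges.length = 0)) := by
  have ha := g.length_pos
  have hb := h.length_pos
  by_cases hlt : o < g.edges.length
  · rw [E_left g h k o hlt, cycle_src_eq_v_iff g o hlt]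
    omega
  · have hle : g.edges.length ≤ o := by omega
    obtain ⟨j, rfl⟩ := Nat.exists_eq_add_of_le hle
    have hj : j < (k + 2) * h.edges.length := by omega
    rw [E_right g h k j hj, cycle_src_eq_v_iff h (j % h.edges.length) (Nat.mod_lt _ hb)]
    simp only [Nat.add_sub_cancel_left]
    omega

lemma exists_rep (n : ℕ) : ∃ k o, o < g.edges.length + (k + 2) * h.edges.length ∧
    n = sums (ghF g h) k + o := by
  refine ⟨(blockIdx (ghF g h) n).1, (blockIdx (ghF g h) n).2, ?_, blockIdx_spec _ n⟩
  rw [← ghF_length g h (blockIdx (ghF g h) n).1]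
  exact (blockIdx (ghF g h) n).2.isLt

lemma Q_of_sums (k : ℕ) :
    G.src ((infConcat (ghF g h)).edge (sums (ghF g h) k)) = v ∧
    G.src ((infConcat (ghF g h)).edge (sums (ghF g h) k + g.edges.length)) = v ∧
    ∀ i (hi : i < g.edges.length),
      (infConcat (ghF g h)).edge (sums (ghF g h) k + i) = g.edges[i] := by
  have ha := g.length_pos
  have hb := h.length_pos
  refine ⟨?_, ?_, fun i hi => E_left g h k i hi⟩
  · have h1 := E_left g h k 0 ha
    rw [Nat.add_zero] at h1
    rw [h1]
    exact (cycle_src_eq_v_iff g 0 ha).mpr rfl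
  · have h0 : (0 : ℕ) < (k + 2) * h.edges.length := by positivity
    have h1 := E_right g h k 0 h0
    rw [Nat.add_zero] at h1
    rw [h1]
    rw [cycle_src_eq_v_iff h _ (Nat.mod_lt _ hb)]
    simp

lemma sums_of_Q (hgh : g.edges ≠ h.edges) (n : ℕ)
    (h1 : G.src ((infConcat (ghF g h)).edge n) = v)
    (h2 : G.src ((infConcat (ghF g h)).edge (n + g.edges.length)) = v)
    (h3 : ∀ i (hi : i < g.edges.length),
      (infConcat (ghF g h)).edge (n + i) = g.edges[i]) :
    ∃ k, n = sums (ghF g h) k := by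
  have ha := g.length_pos
  have hb := h.length_pos
  obtain ⟨k, o, ho, rfl⟩ := exists_rep g h n
  rw [src_E_eq_v_iff g h k o ho] at h1
  rcases h1 with rfl | ⟨hle, hmod⟩
  · exact ⟨k, by omega⟩
  exfalso
  obtain ⟨j, rfl⟩ := Nat.exists_eq_add_of_le hle
  simp only [Nat.add_sub_cancel_left] at hmod
  have hj : j < (k + 2) * h.edges.length := by omega
  have hjle : j ≤ (k + 1) * h.edges.length := by
    obtain ⟨q, rfl⟩ := Nat.dvd_of_mod_eq_zero hmod
    have h1 : h.edges.length * q < h.edges.length * (k + 2) := by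
      calc h.edges.length * q < (k + 2) * h.edges.length := hj
        _ = h.edges.length * (k + 2) := by ring
    have hq : q < k + 2 := Nat.lt_of_mul_lt_mul_left h1
    calc h.edges.length * q ≤ h.edges.length * (k + 1) :=
          Nat.mul_le_mul_left _ (by omega)
      _ = (k + 1) * h.edges.length := by ring
  rcases lt_trichotomy g.edges.length h.edges.length with hab | hab | hab
  · -- |g| < |h|
    have hja : j + g.edges.length < (k + 2) * h.edges.length := by
      have he : (k + 1) * h.edges.length + h.edges.length = (k + 2) * h.edges.length := by ring
      omega
    have hmi : (j + g.edges.length) % h.edges.length = g.edges.length := by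
      rcases Nat.dvd_of_mod_eq_zero hmod with ⟨q, hq⟩
      rw [hq, Nat.mul_add_mod]
      exact Nat.mod_eq_of_lt hab
    have hE := E_right g h k (j + g.edges.length) hja
    simp only [hmi] at hE
    rw [show sums (ghF g h) k + (g.edges.length + j) + g.edges.length =
      sums (ghF g h) k + (g.edges.length + (j + g.edges.length)) by omega, hE] at h2
    rw [cycle_src_eq_v_iff h g.edges.length hab] at h2
    omega
  · -- |g| = |h| : the lists are equal
    apply hgh
    apply List.ext_getElem (by omega)
    intro i hi1 hi2
    have hji : j + i < (k + 2) * h.edges.length := by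
      have he : (k + 1) * h.edges.length + h.edges.length = (k + 2) * h.edges.length := by ring
      omega
    have hmi : (j + i) % h.edges.length = i := by
      rcases Nat.dvd_of_mod_eq_zero hmod with ⟨q, hq⟩
      rw [hq, Nat.mul_add_mod]
      exact Nat.mod_eq_of_lt hi2
    have hE := E_right g h k (j + i) hji
    simp only [hmi] at hE
    have hg := h3 i hi1
    rw [show sums (ghF g h) k + (g.edges.length + j) + i =
      sums (ghF g h) k + (g.edges.length + (j + i)) by omega, hE] at hg
    exact hg.symm
  · -- |h| < |g|
    have hg := h3 h.edges.length hab
    rw [show sums (ghF g h) k + (g.edges.length + j) + h.edges.length =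
      sums (ghF g h) k + (g.edges.length + (j + h.edges.length)) by omega] at hg
    have hsrc : G.src ((infConcat (ghF g h)).edge
        (sums (ghF g h) k + (g.edges.length + (j + h.edges.length)))) = v := by
      rcases Nat.lt_or_ge (j + h.edges.length) ((k + 2) * h.edges.length) with hc | hc
      · rw [src_E_eq_v_iff g h k (g.edges.length + (j + h.edges.length)) (by omega)]
        right
        refine ⟨by omega, ?_⟩
        simp only [Nat.add_sub_cancel_left]
        simp [Nat.add_mod, hmod]
      · have hj2 : j + h.edges.length = (k + 2) * h.edges.length := by
          have he : (k + 1) * h.edges.length + h.edges.length =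
            (k + 2) * h.edges.length := by ring
          omega
        have hpos : sums (ghF g h) k + (g.edges.length + (j + h.edges.length)) =
            sums (ghF g h) (k + 1) := by
          rw [sums_succ, ghF_length]; omega
        rw [hpos]
        exact (Q_of_sums g h (k + 1)).1
    rw [hg] at hsrc
    rw [cycle_src_eq_v_iff g h.edges.length (by omega)] at hsrc
    omega

end Main

/-- If `g` and `h` are distinct cycles based at the same vertex `v`, then the infinite
path `p = g h² g h³ g h⁴ ⋯` is not tail-equivalent to the rational path `c^∞` for any
closed path `c`. (Here the `k`-th block of `p` is `g·h^{k+2}`, i.e. `g.comp (h.pow (k+1))`.) -/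
theorem concat_not_tailEquiv_rational {G : DirGraph} {v : G.V}
    (g h : G.Cycle v) (hgh : g.edges ≠ h.edges) :
    ¬ ∃ (w : G.V) (c : G.ClosedPath w),
        TailEquiv (infConcat (fun k => g.toClosedPath.comp (h.toClosedPath.pow (k + 1))))
          c.toInfPath := by
  rintro ⟨w, c, m, n0, hpq⟩
  have ha := g.length_pos
  have hb := h.length_pos
  have hL0 : 0 < c.edges.length := c.length_pos
  have hE : ∀ k, (infConcat (ghF g h)).edge (k + m) = c.toInfPath.edge (k + n0) :=
    fun k => congrFun (congrArg InfPath.edge hpq) k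
  have hper : ∀ j, m ≤ j → (infConcat (ghF g h)).edge (j + c.edges.length) =
      (infConcat (ghF g h)).edge j := by
    intro j hj
    obtain ⟨k, rfl⟩ := Nat.exists_eq_add_of_le hj
    have e1 := hE k
    have e2 := hE (k + c.edges.length)
    have e3 : c.toInfPath.edge (k + c.edges.length + n0) = c.toInfPath.edge (k + n0) := by
      rw [show k + c.edges.length + n0 = (k + n0) + c.edges.length by omega]
      exact toInfPath_edge_add c (k + n0)
    rw [show m + k + c.edges.length = (k + c.edges.length) + m by omega, e2, e3,
      show m + k = k + m by omega, e1]
  set k0 := m + c.edges.length with hk0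
  have hm : m ≤ sums (ghF g h) k0 := le_trans (by omega) (le_sums (ghF g h) k0)
  have hgap : c.edges.length < g.edges.length + (k0 + 2) * h.edges.length := by
    have hh : k0 + 2 ≤ (k0 + 2) * h.edges.length := Nat.le_mul_of_pos_right _ hb
    omega
  obtain ⟨q1, q2, q3⟩ := Q_of_sums g h k0
  have h1' : G.src ((infConcat (ghF g h)).edge (sums (ghF g h) k0 + c.edges.length)) = v := by
    rw [hper _ hm]; exact q1
  have h2' : G.src ((infConcat (ghF g h)).edge
      (sums (ghF g h) k0 + c.edges.length + g.edges.length)) = v := by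
    rw [show sums (ghF g h) k0 + c.edges.length + g.edges.length =
      (sums (ghF g h) k0 + g.edges.length) + c.edges.length by omega, hper _ (by omega)]
    exact q2
  have h3' : ∀ i (hi : i < g.edges.length),
      (infConcat (ghF g h)).edge (sums (ghF g h) k0 + c.edges.length + i) = g.edges[i] := by
    intro i hi
    rw [show sums (ghF g h) k0 + c.edges.length + i =
      (sums (ghF g h) k0 + i) + c.edges.length by omega, hper _ (by omega)]
    exact q3 i hi
  obtain ⟨k', hk'⟩ := sums_of_Q g h hgh _ h1' h2' h3'
  have hlt1 : sums (ghF g h) k0 < sums (ghF g h) k' := by omega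
  have hlt2 : sums (ghF g h) k' < sums (ghF g h) (k0 + 1) := by
    rw [sums_succ, ghF_length]; omega
  have c1 := (sums_strictMono (ghF g h)).lt_iff_lt.mp hlt1
  have c2 := (sums_strictMono (ghF g h)).lt_iff_lt.mp hlt2
  omega

end DirGraph
end
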